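/- Let P be a shortest s-t path in a weighted undirected graph G with positive edge weights, and suppose every vertex on P lies in V_r (i.e., the ball of radius r around it contains at most K vertices). Define a sequence starting at s where each next vertex is the farthest vertex on P (toward t) within distance r of the current vertex. If r > εd/2 + W where d = d(s,t), W is the maximum edge weight, and ε > 0, then consecutive vertices in this sequence (except possibly the final pair) have distance greater than εd/2, so the sequence reaches t in at most ⌈2/ε⌉ steps. -/
import Mathlib


/-- Greedy skipping sequence along a shortest s-t path.
Vertices of the shortest path `P` are identified with their cumulative
positions `pos : ℕ → ℝ` along the path (so `d(x_i, x_j) = pos j - pos i`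
for `i ≤ j`, since `P` is a shortest path). `idx` enumerates the greedy
sequence: `idx 0 = 0` (vertex `s`), `idx m = N` (vertex `t`); each next
vertex is the farthest path vertex within distance `r` of the current one.
If `r > ε·d/2 + W`, consecutive sequence vertices (except possibly the
final pair) are more than `ε·d/2` apart, and the sequence reaches `t`
within `⌈2/ε⌉` steps. -/
theorem stmt_0 (ε d W r : ℝ) (hε : 0 < ε) (hd : 0 ≤ d) (hW : 0 < W)
    (hr : ε * d / 2 + W < r)
    (pos : ℕ → ℝ) (N : ℕ) (hmono : Monotone pos)
    (hpos0 : pos 0 = 0) (hposN : pos N = d)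
    (hstep : ∀ i < N, pos (i + 1) - pos i ≤ W)
    (idx : ℕ → ℕ) (m : ℕ)
    (hidx0 : idx 0 = 0) (hidxm : idx m = N)
    (hinc : StrictMonoOn idx (Set.Iic m))
    (hwithin : ∀ i < m, pos (idx (i + 1)) - pos (idx i) ≤ r)
    (hmax : ∀ i < m, idx (i + 1) < N → r < pos (idx (i + 1) + 1) - pos (idx i)) :
    (∀ i, i + 1 < m → ε * d / 2 < pos (idx (i + 1)) - pos (idx i)) ∧
      m ≤ ⌈2 / ε⌉₊ := by
  have hgap : ∀ i, i + 1 < m → ε * d / 2 < pos (idx (i + 1)) - pos (idx i) := by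
    intro i hi
    have h1 : idx (i + 1) < N := by
      rw [← hidxm]
      exact hinc (Set.mem_Iic.mpr hi.le) (Set.mem_Iic.mpr le_rfl) hi
    have h2 := hmax i (Nat.lt_of_succ_lt hi) h1
    have h3 := hstep (idx (i + 1)) h1
    linarith
  refine ⟨hgap, ?_⟩
  rcases Nat.lt_or_ge m 2 with hm | hm
  · have : 1 ≤ ⌈2 / ε⌉₊ := Nat.one_le_ceil_iff.mpr (by positivity)
    omega
  · have hnonneg : ∀ i < m, 0 ≤ pos (idx (i + 1)) - pos (idx i) := by
      intro i hi
      have : idx i < idx (i + 1) :=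
        hinc (Set.mem_Iic.mpr hi.le) (Set.mem_Iic.mpr hi) (Nat.lt_succ_self i)
      linarith [hmono this.le]
    have hsum : ∑ i ∈ Finset.range m, (pos (idx (i + 1)) - pos (idx i)) = d := by
      rw [Finset.sum_range_sub (fun i => pos (idx i)), hidx0, hidxm, hpos0, hposN]
      ring
    have hsub : ∑ i ∈ Finset.range (m - 1), (pos (idx (i + 1)) - pos (idx i)) ≤ d := by
      rw [← hsum]
      apply Finset.sum_le_sum_of_subset_of_nonneg
      · exact Finset.range_subset_range.mpr (Nat.sub_le m 1)
      · intro i hi _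
        exact hnonneg i (Finset.mem_range.mp hi)
    have hlt : (m - 1 : ℕ) * (ε * d / 2) < ∑ i ∈ Finset.range (m - 1),
        (pos (idx (i + 1)) - pos (idx i)) := by
      have := Finset.sum_lt_sum_of_nonempty
        (s := Finset.range (m - 1)) (f := fun _ => ε * d / 2)
        (g := fun i => pos (idx (i + 1)) - pos (idx i))
        (Finset.nonempty_range_iff.mpr (by omega))
        (fun i hi => hgap i (by have := Finset.mem_range.mp hi; omega))
      simpa [Finset.sum_const, Finset.card_range, nsmul_eq_mul] using this
    have hkey : (m - 1 : ℕ) * (ε * d / 2) < d := lt_of_lt_of_le hlt hsub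
    have hmpos : (1 : ℝ) ≤ (m - 1 : ℕ) := by
      exact_mod_cast Nat.one_le_iff_ne_zero.mpr (by omega)
    have hdpos : 0 < d := by
      rcases lt_or_eq_of_le hd with h | h
      · exact h
      · exfalso; rw [← h] at hkey; norm_num at hkey
    have hlt2 : ((m - 1 : ℕ) : ℝ) < 2 / ε := by
      rw [lt_div_iff₀ hε]
      nlinarith
    have : ((m - 1 : ℕ) : ℝ) < (⌈2 / ε⌉₊ : ℝ) := lt_of_lt_of_le hlt2 (Nat.le_ceil _)
    have : (m - 1 : ℕ) < ⌈2 / ε⌉₊ := by exact_mod_cast this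
    omega
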